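/- arXiv:2306.02640 — 4 statements merged into one kernel-verified Lean document; each statement's English description precedes it below -/
import Mathlib

section
/- Let k₀ be a field, k₁ a field extension of k₀, and f₁, …, f_r ∈ k₀[[t₁,…,t_n]] formal power series. If f₁, …, f_r are linearly dependent over the field k₁(t₁,…,t_n), then they are linearly dependent over k₀(t₁,…,t_n). -/
/-- Descent of linear dependence: if power series `f₁, …, f_r ∈ k₀[[t₁,…,t_n]]` are linearly
dependent over `k₁(t₁,…,t_n)` for a field extension `k₁/k₀` (equivalently, admit a nontrivial
linear relation with polynomial coefficients over `k₁`), then they are linearly dependent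
over `k₀(t₁,…,t_n)`. -/
theorem linear_dependence_descends (k₀ k₁ : Type*) [Field k₀] [Field k₁] [Algebra k₀ k₁]
    (n r : ℕ) (f : Fin r → MvPowerSeries (Fin n) k₀)
    (h : ∃ A : Fin r → MvPolynomial (Fin n) k₁, (∃ i, A i ≠ 0) ∧
      ∑ i, (MvPolynomial.coeToMvPowerSeries.ringHom (A i)) *
        (MvPowerSeries.map (algebraMap k₀ k₁) (f i)) = 0) :
    ∃ B : Fin r → MvPolynomial (Fin n) k₀, (∃ i, B i ≠ 0) ∧
      ∑ i, (MvPolynomial.coeToMvPowerSeries.ringHom (B i)) * f i = 0 := by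
  obtain ⟨A, ⟨i₀, hi₀⟩, hsum⟩ := h
  obtain ⟨m₀, hm₀⟩ : ∃ m, MvPolynomial.coeff m (A i₀) ≠ 0 := by
    by_contra h'
    push_neg at h'
    exact hi₀ (MvPolynomial.ext _ _ fun m => by simpa using h' m)
  -- choose a k₀-linear functional ℓ : k₁ → k₀ not vanishing on the nonzero coefficient
  set bV := Module.Basis.ofVectorSpace k₀ k₁ with hbV
  obtain ⟨b, hb⟩ : ∃ b, bV.repr (MvPolynomial.coeff m₀ (A i₀)) b ≠ 0 := by
    by_contra h'
    push_neg at h'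
    apply hm₀
    have : bV.repr (MvPolynomial.coeff m₀ (A i₀)) = 0 := Finsupp.ext fun b => h' b
    simpa using congrArg bV.repr.symm this
  set ℓ : k₁ →ₗ[k₀] k₀ := bV.coord b with hℓdef
  have hℓ : ℓ (MvPolynomial.coeff m₀ (A i₀)) ≠ 0 := hb
  have hℓalg : ∀ (c : k₀) (x : k₁), ℓ (x * algebraMap k₀ k₁ c) = ℓ x * c := by
    intro c x
    have : x * algebraMap k₀ k₁ c = c • x := by
      rw [Algebra.smul_def, mul_comm]
    rw [this, map_smul, smul_eq_mul, mul_comm]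
  -- define B by applying ℓ to each coefficient of A
  set B : Fin r → MvPolynomial (Fin n) k₀ := fun i =>
    ∑ m ∈ (A i).support, MvPolynomial.monomial m (ℓ (MvPolynomial.coeff m (A i))) with hBdef
  have hBcoeff : ∀ i m, MvPolynomial.coeff m (B i) = ℓ (MvPolynomial.coeff m (A i)) := by
    intro i m
    simp only [hBdef, MvPolynomial.coeff_sum, MvPolynomial.coeff_monomial]
    rw [Finset.sum_ite_eq' (A i).support m fun s => ℓ (MvPolynomial.coeff s (A i))]
    by_cases hm : m ∈ (A i).support
    · simp [hm]
    · simp [hm, MvPolynomial.notMem_support_iff.mp hm]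
  refine ⟨B, ⟨i₀, fun h0 => hℓ ?_⟩, ?_⟩
  · rw [← hBcoeff i₀ m₀, h0, MvPolynomial.coeff_zero]
  · ext m
    have h0 := congrArg (MvPowerSeries.coeff (R := k₁) m) hsum
    rw [map_sum, map_zero] at h0
    have key : MvPowerSeries.coeff (R := k₀) m
        (∑ i, (MvPolynomial.coeToMvPowerSeries.ringHom (B i)) * f i) =
        ℓ (∑ i, MvPowerSeries.coeff (R := k₁) m
          ((MvPolynomial.coeToMvPowerSeries.ringHom (A i)) *
            MvPowerSeries.map (algebraMap k₀ k₁) (f i))) := by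
      rw [map_sum, map_sum]
      refine Finset.sum_congr rfl fun i _ => ?_
      rw [MvPowerSeries.coeff_mul, MvPowerSeries.coeff_mul]
      rw [map_sum ℓ (fun p => MvPowerSeries.coeff (R := k₁) p.1 (MvPolynomial.coeToMvPowerSeries.ringHom (A i)) * MvPowerSeries.coeff (R := k₁) p.2 (MvPowerSeries.map (algebraMap k₀ k₁) (f i))) (Finset.HasAntidiagonal.antidiagonal m)]
      refine Finset.sum_congr rfl fun p _ => ?_
      simp only [MvPolynomial.coeToMvPowerSeries.ringHom_apply, MvPolynomial.coeff_coe,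
        MvPowerSeries.coeff_map]
      rw [hℓalg, hBcoeff]
    rw [key, h0, map_zero, map_zero]
end

section
/- Let k be an arbitrary field of characteristic p > 0 with perfect closure k_p, and let f ∈ k[[t₁,…,t_n]] be algebraic over k(t₁,…,t_n). Then the degree of the field extension k(t₁,…,t_n)(f) over k(t₁,…,t_n) equals the degree of k_p(t₁,…,t_n)(f) over k_p(t₁,…,t_n). -/
open Polynomial

section Descent

variable {σ k k' : Type*} [Field k] [Field k']

/-- Apply a coordinate functional coefficientwise to a multivariate polynomial. -/
noncomputable def compPoly (φ : k' →+ k) (a : MvPolynomial σ k') : MvPolynomial σ k :=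
  ∑ m ∈ a.support, MvPolynomial.monomial m (φ (MvPolynomial.coeff m a))

theorem compPoly_coeff (φ : k' →+ k) (a : MvPolynomial σ k') (m : σ →₀ ℕ) :
    MvPolynomial.coeff m (compPoly φ a) = φ (MvPolynomial.coeff m a) := by
  classical
  rw [compPoly, MvPolynomial.coeff_sum]
  simp only [MvPolynomial.coeff_monomial]
  by_cases h : m ∈ a.support
  · rw [Finset.sum_eq_single m]
    · simp
    · intro b _ hb; simp [hb]
    · intro hm; exact absurd h hm
  · rw [Finset.sum_eq_zero]
    · rw [MvPolynomial.notMem_support_iff.mp h, map_zero]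
    · intro b hb
      have : b ≠ m := by rintro rfl; exact h hb
      simp [this]

theorem compPoly_coe_mul (ι : k →+* k') (φ : k' →+ k)
    (hφ : ∀ (x : k') (c : k), φ (x * ι c) = φ x * c)
    (a : MvPolynomial σ k') (g : MvPowerSeries σ k) (m : σ →₀ ℕ) :
    MvPowerSeries.coeff m ((compPoly φ a : MvPowerSeries σ k) * g)
      = φ (MvPowerSeries.coeff m
          ((a : MvPowerSeries σ k') * MvPowerSeries.map ι g)) := by
  classical
  rw [MvPowerSeries.coeff_mul, MvPowerSeries.coeff_mul, map_sum]
  refine Finset.sum_congr rfl fun q _ => ?_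
  rw [MvPolynomial.coeff_coe, MvPolynomial.coeff_coe, compPoly_coeff,
    MvPowerSeries.coeff_map, hφ]

/-- Naturality of the coercion of `MvPolynomial` into `MvPowerSeries`. -/
theorem coe_mvPolynomial_map (ι : k →+* k') (a : MvPolynomial σ k) :
    ((MvPolynomial.map ι a : MvPolynomial σ k') : MvPowerSeries σ k')
      = MvPowerSeries.map ι (a : MvPowerSeries σ k) := by
  ext m
  rw [MvPolynomial.coeff_coe, MvPowerSeries.coeff_map, MvPolynomial.coeff_coe,
    MvPolynomial.coeff_map]

/-- Easy direction: push an annihilator forward along a field embedding. -/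
theorem eval₂_map_of_eval₂_eq_zero (ι : k →+* k') (f : MvPowerSeries σ k)
    (A : Polynomial (MvPolynomial σ k))
    (h : Polynomial.eval₂ MvPolynomial.coeToMvPowerSeries.ringHom f A = 0) :
    Polynomial.eval₂ MvPolynomial.coeToMvPowerSeries.ringHom (MvPowerSeries.map ι f)
      (A.map (MvPolynomial.map ι)) = 0 := by
  have hcomp : (MvPolynomial.coeToMvPowerSeries.ringHom
        (σ := σ) (R := k')).comp (MvPolynomial.map ι)
      = (MvPowerSeries.map ι).comp MvPolynomial.coeToMvPowerSeries.ringHom :=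
    RingHom.ext fun a => coe_mvPolynomial_map ι a
  rw [Polynomial.eval₂_map, hcomp, ← Polynomial.hom_eval₂, h, map_zero]

/-- Descent: an annihilator over `k'` yields one over `k` of no larger degree. -/
theorem descent (ι : k →+* k') (f : MvPowerSeries σ k)
    (A' : Polynomial (MvPolynomial σ k')) (hA' : A' ≠ 0)
    (h0 : Polynomial.eval₂ MvPolynomial.coeToMvPowerSeries.ringHom
      (MvPowerSeries.map ι f) A' = 0) :
    ∃ A : Polynomial (MvPolynomial σ k), A ≠ 0 ∧
      Polynomial.eval₂ MvPolynomial.coeToMvPowerSeries.ringHom f A = 0 ∧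
      A.natDegree ≤ A'.natDegree := by
  classical
  letI : Algebra k k' := ι.toAlgebra
  set b := Module.Basis.ofVectorSpace k k' with hb
  -- the coordinate functionals
  have hφmul : ∀ j (x : k') (c : k),
      ((b.coord j).toAddMonoidHom : k' →+ k) (x * ι c)
        = ((b.coord j).toAddMonoidHom : k' →+ k) x * c := by
    intro j x c
    have : x * ι c = c • x := by
      rw [Algebra.smul_def, mul_comm]; rfl
    simp only [this, LinearMap.toAddMonoidHom_coe, map_smul, Module.Basis.coord_apply,
      smul_eq_mul, mul_comm]
  -- the candidate polynomials over k
  set Apoly : ↑(Module.Basis.ofVectorSpaceIndex k k') → Polynomial (MvPolynomial σ k) := fun j =>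
    ∑ i ∈ A'.support,
      Polynomial.C (compPoly ((b.coord j).toAddMonoidHom) (A'.coeff i)) * Polynomial.X ^ i
    with hApoly
  have hcoeff : ∀ j i, (Apoly j).coeff i
      = compPoly ((b.coord j).toAddMonoidHom) (A'.coeff i) := by
    intro j i
    rw [hApoly]
    simp only [Polynomial.finset_sum_coeff, Polynomial.coeff_C_mul, Polynomial.coeff_X_pow,
      mul_ite, mul_one, mul_zero]
    by_cases h : i ∈ A'.support
    · rw [Finset.sum_eq_single i]
      · simp
      · intro b' _ hb'; simp [Ne.symm hb']
      · intro hi; exact absurd h hi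
    · rw [Finset.sum_eq_zero]
      · ext m
        rw [compPoly_coeff, Polynomial.notMem_support_iff.mp h]
        simp
      · intro b' hb'
        have : i ≠ b' := by rintro rfl; exact h hb'
        simp [this]
  -- evaluation of Apoly j at f
  have heval : ∀ j, Polynomial.eval₂ MvPolynomial.coeToMvPowerSeries.ringHom f (Apoly j) = 0 := by
    intro j
    rw [hApoly, Polynomial.eval₂_finset_sum]
    simp only [Polynomial.eval₂_mul, Polynomial.eval₂_C, Polynomial.eval₂_X_pow]
    ext m
    rw [map_sum, map_zero]
    have hsum : ∀ i ∈ A'.support,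
        MvPowerSeries.coeff m
          ((MvPolynomial.coeToMvPowerSeries.ringHom
            (compPoly ((b.coord j).toAddMonoidHom) (A'.coeff i))) * f ^ i)
        = ((b.coord j).toAddMonoidHom : k' →+ k)
            (MvPowerSeries.coeff m
              ((MvPolynomial.coeToMvPowerSeries.ringHom (A'.coeff i))
                * (MvPowerSeries.map ι f) ^ i)) := by
      intro i _
      have := compPoly_coe_mul ι ((b.coord j).toAddMonoidHom) (hφmul j)
        (A'.coeff i) (f ^ i) m
      rw [MvPolynomial.coeToMvPowerSeries.ringHom_apply,
        MvPolynomial.coeToMvPowerSeries.ringHom_apply, this, map_pow]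
    rw [Finset.sum_congr rfl hsum, ← map_sum, ← map_sum]
    have : ∑ i ∈ A'.support,
        (MvPolynomial.coeToMvPowerSeries.ringHom (A'.coeff i))
          * (MvPowerSeries.map ι f) ^ i = 0 := by
      rw [← h0, Polynomial.eval₂_eq_sum, Polynomial.sum_def]
    rw [this, map_zero, map_zero]
  -- nonvanishing for a suitable j
  obtain ⟨i, hi⟩ : ∃ i, A'.coeff i ≠ 0 :=
    ⟨A'.natDegree, fun h => hA' (Polynomial.leadingCoeff_eq_zero.mp h)⟩
  obtain ⟨m, hm⟩ : ∃ m, MvPolynomial.coeff m (A'.coeff i) ≠ 0 := by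
    by_contra h
    push_neg at h
    exact hi (MvPolynomial.ext _ _ fun m => by rw [h m, MvPolynomial.coeff_zero])
  obtain ⟨j, hj⟩ : ∃ j, b.repr (MvPolynomial.coeff m (A'.coeff i)) j ≠ 0 := by
    by_contra h
    push_neg at h
    apply hm
    have : b.repr (MvPolynomial.coeff m (A'.coeff i)) = 0 := Finsupp.ext h
    exact b.repr.map_eq_zero_iff.mp this
  refine ⟨Apoly j, ?_, heval j, ?_⟩
  · intro h
    apply hj
    have := congrArg (fun P => MvPolynomial.coeff m (P.coeff i)) h
    simp only [hcoeff, compPoly_coeff, Polynomial.coeff_zero, MvPolynomial.coeff_zero] at this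
    exact this
  · rw [Polynomial.natDegree_le_iff_coeff_eq_zero]
    intro N hN
    rw [hcoeff]
    have : A'.coeff N = 0 := Polynomial.coeff_eq_zero_of_natDegree_lt hN
    rw [this]
    ext m'
    rw [compPoly_coeff]
    simp

end Descent

/-- Passing to the perfect closure does not change the algebraicity degree: for `f ∈ k[[t₁,…,t_n]]`
algebraic over `k(t₁,…,t_n)`, the degree `[k(t)(f) : k(t)]` — i.e. the minimal `y`-degree of a
nonzero annihilating polynomial with coefficients in `k[t₁,…,t_n]` — equals the corresponding
degree over the perfect closure `k_p`. -/
theorem degree_invariant_under_perfect_closure (k : Type*) [Field k] (p : ℕ) [Fact p.Prime]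
    [CharP k p] (n : ℕ) (f : MvPowerSeries (Fin n) k)
    (halg : ∃ A : Polynomial (MvPolynomial (Fin n) k), A ≠ 0 ∧
      Polynomial.eval₂ MvPolynomial.coeToMvPowerSeries.ringHom f A = 0) :
    sInf {d : ℕ | ∃ A : Polynomial (MvPolynomial (Fin n) k), A ≠ 0 ∧
        Polynomial.eval₂ MvPolynomial.coeToMvPowerSeries.ringHom f A = 0 ∧ A.natDegree = d} =
    sInf {d : ℕ | ∃ A : Polynomial (MvPolynomial (Fin n) (PerfectClosure k p)), A ≠ 0 ∧
        Polynomial.eval₂ MvPolynomial.coeToMvPowerSeries.ringHom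
          (MvPowerSeries.map (PerfectClosure.of k p) f) A = 0 ∧ A.natDegree = d} := by
  set ι := PerfectClosure.of k p with hι
  have hιinj : Function.Injective ι := ι.injective
  have hmapinj : Function.Injective (MvPolynomial.map (σ := Fin n) ι) :=
    MvPolynomial.map_injective ι hιinj
  obtain ⟨A₀, hA₀, hA₀0⟩ := halg
  set S : Set ℕ := {d : ℕ | ∃ A : Polynomial (MvPolynomial (Fin n) k), A ≠ 0 ∧
    Polynomial.eval₂ MvPolynomial.coeToMvPowerSeries.ringHom f A = 0 ∧ A.natDegree = d} with hS
  set S' : Set ℕ := {d : ℕ | ∃ A : Polynomial (MvPolynomial (Fin n) (PerfectClosure k p)), A ≠ 0 ∧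
    Polynomial.eval₂ MvPolynomial.coeToMvPowerSeries.ringHom
      (MvPowerSeries.map ι f) A = 0 ∧ A.natDegree = d} with hS'
  have hSne : S.Nonempty := ⟨A₀.natDegree, A₀, hA₀, hA₀0, rfl⟩
  have push : ∀ A : Polynomial (MvPolynomial (Fin n) k), A ≠ 0 →
      Polynomial.eval₂ MvPolynomial.coeToMvPowerSeries.ringHom f A = 0 →
      A.natDegree ∈ S' := by
    intro A hA h0
    exact ⟨A.map (MvPolynomial.map ι),
      (Polynomial.map_ne_zero_iff hmapinj).mpr hA,
      eval₂_map_of_eval₂_eq_zero ι f A h0,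
      Polynomial.natDegree_map_eq_of_injective hmapinj A⟩
  have hS'ne : S'.Nonempty := ⟨A₀.natDegree, push A₀ hA₀ hA₀0⟩
  apply le_antisymm
  · obtain ⟨A', h1, h2, h3⟩ := Nat.sInf_mem hS'ne
    obtain ⟨A, hA, hA0, hle⟩ := descent ι f A' h1 h2
    calc sInf S ≤ A.natDegree := Nat.sInf_le ⟨A, hA, hA0, rfl⟩
      _ ≤ A'.natDegree := hle
      _ = sInf S' := h3
  · obtain ⟨A, h1, h2, h3⟩ := Nat.sInf_mem hSne
    have := push A h1 h2
    rw [h3] at this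
    exact Nat.sInf_le this
end

section
/- Let k be a field and A, B ∈ k[t₁,…,t_n] nonzero polynomials. Then the Newton polytope of the product satisfies NP(AB) = NP(A) + NP(B), where + denotes the Minkowski sum. -/
open scoped Pointwise

/-- The Newton polytope of a multivariate polynomial: the convex hull in `ℝⁿ` of its exponent
vectors. -/
noncomputable def newtonPolytope {k : Type*} [Field k] {n : ℕ} (A : MvPolynomial (Fin n) k) :
    Set (Fin n → ℝ) :=
  convexHull ℝ ((fun d : Fin n →₀ ℕ => fun i => (d i : ℝ)) '' (A.support : Set (Fin n →₀ ℕ)))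

set_option maxHeartbeats 1000000 in
/-- For nonzero polynomials `A, B` over a field, `NP(AB) = NP(A) + NP(B)` (Minkowski sum). -/
theorem newtonPolytope_mul {k : Type*} [Field k] {n : ℕ} (A B : MvPolynomial (Fin n) k)
    (hA : A ≠ 0) (hB : B ≠ 0) :
    newtonPolytope (A * B) = newtonPolytope A + newtonPolytope B := by
  classical
  set f : (Fin n →₀ ℕ) → (Fin n → ℝ) := fun d => fun i => (d i : ℝ) with hf
  have hfadd : ∀ a b : Fin n →₀ ℕ, f (a + b) = f a + f b := by
    intro a b; funext i; simp [hf]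
  have hfinj : Function.Injective f := by
    intro a b hab
    ext i
    have := congrFun hab i
    simpa [hf] using this
  set SA : Set (Fin n → ℝ) := f '' (A.support : Set (Fin n →₀ ℕ)) with hSA
  set SB : Set (Fin n → ℝ) := f '' (B.support : Set (Fin n →₀ ℕ)) with hSB
  have hsum : newtonPolytope A + newtonPolytope B = convexHull ℝ (SA + SB) :=
    (convexHull_add SA SB).symm
  -- Key uniqueness: an extreme point of convexHull (SA + SB) decomposes uniquely
  have hSAB_fin : (SA + SB).Finite :=
    Set.Finite.add ((A.support.finite_toSet).image f) ((B.support.finite_toSet).image f)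
  have hext : ∀ v ∈ (convexHull ℝ (SA + SB)).extremePoints ℝ,
      v ∈ f '' ((A * B).support : Set (Fin n →₀ ℕ)) := by
    intro v hv
    have hvmem : v ∈ SA + SB := extremePoints_convexHull_subset hv
    obtain ⟨x, hx, y, hy, hxy⟩ := hvmem
    obtain ⟨α, hα, rfl⟩ := hx
    obtain ⟨β, hβ, rfl⟩ := hy
    replace hxy : f α + f β = v := hxy
    -- uniqueness of the decomposition
    have huniq : ∀ α' ∈ A.support, ∀ β' ∈ B.support, f α' + f β' = v → α' = α ∧ β' = β := by
      intro α' hα' β' hβ' hsum'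
      have hx1 : f α + f β' ∈ convexHull ℝ (SA + SB) :=
        subset_convexHull ℝ _ ⟨f α, ⟨α, hα, rfl⟩, f β', ⟨β', hβ', rfl⟩, rfl⟩
      have hx2 : f α' + f β ∈ convexHull ℝ (SA + SB) :=
        subset_convexHull ℝ _ ⟨f α', ⟨α', hα', rfl⟩, f β, ⟨β, hβ, rfl⟩, rfl⟩
      have hseg : v ∈ openSegment ℝ (f α + f β') (f α' + f β) := by
        refine ⟨1/2, 1/2, by norm_num, by norm_num, by norm_num, ?_⟩
        have key : (f α + f β) + (f α' + f β') = v + v := by rw [hxy, hsum']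
        have : (f α + f β') + (f α' + f β) = v + v := by rw [← key]; abel
        funext i
        have hi := congrFun this i
        have hxyi := congrFun hxy i
        simp only [Pi.add_apply] at hi hxyi
        simp only [Pi.smul_apply, Pi.add_apply, smul_eq_mul]
        linarith
      obtain ⟨h1, h2⟩ := (mem_extremePoints.1 hv).2 _ hx1 _ hx2 hseg
      have hβ'β : β' = β := by
        apply hfinj
        have : f α + f β' = f α + f β := by rw [h1, ← hxy]
        exact add_left_cancel this
      have hα'α : α' = α := by
        apply hfinj
        have : f α' + f β = f α + f β := by rw [h2, ← hxy]
        exact add_right_cancel this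
      exact ⟨hα'α, hβ'β⟩
    -- the coefficient of α + β in A * B is nonzero
    have hcoeff : MvPolynomial.coeff (α + β) (A * B) =
        MvPolynomial.coeff α A * MvPolynomial.coeff β B := by
      rw [MvPolynomial.coeff_mul]
      refine Finset.sum_eq_single (α, β) ?_ ?_
      · rintro ⟨u, w⟩ huw hne
        rw [Finset.HasAntidiagonal.mem_antidiagonal] at huw
        by_contra h0
        have hu : u ∈ A.support := by
          rw [MvPolynomial.mem_support_iff]
          intro h; exact h0 (by simp [h])
        have hw : w ∈ B.support := by
          rw [MvPolynomial.mem_support_iff]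
          intro h; exact h0 (by simp [h])
        have : f u + f w = v := by
          rw [← hfadd, huw, hfadd, hxy]
        obtain ⟨hu', hw'⟩ := huniq u hu w hw this
        exact hne (by rw [hu', hw'])
      · intro h
        exfalso
        apply h
        rw [Finset.HasAntidiagonal.mem_antidiagonal]
    have hαA : MvPolynomial.coeff α A ≠ 0 := MvPolynomial.mem_support_iff.1 hα
    have hβB : MvPolynomial.coeff β B ≠ 0 := MvPolynomial.mem_support_iff.1 hβ
    have hmem : α + β ∈ (A * B).support := by
      rw [MvPolynomial.mem_support_iff, hcoeff]
      exact mul_ne_zero hαA hβB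
    exact ⟨α + β, hmem, by rw [hfadd, hxy]⟩
  apply Set.Subset.antisymm
  · rw [hsum]
    apply convexHull_mono
    rintro x ⟨d, hd, rfl⟩
    have hd' := MvPolynomial.support_mul A B hd
    rw [Finset.mem_add] at hd'
    obtain ⟨u, hu, w, hw, rfl⟩ := hd'
    exact ⟨f u, ⟨u, hu, rfl⟩, f w, ⟨w, hw, rfl⟩, (hfadd u w).symm⟩
  · rw [hsum]
    have hcomp : IsCompact (convexHull ℝ (SA + SB)) := hSAB_fin.isCompact_convexHull ℝ
    have hclosed : IsClosed (newtonPolytope (A * B)) :=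
      Set.Finite.isClosed_convexHull ℝ (((A * B).support.finite_toSet).image f)
    rw [← closure_convexHull_extremePoints hcomp (convex_convexHull ℝ _)]
    refine closure_minimal ?_ hclosed
    exact convexHull_min (fun v hv => subset_convexHull ℝ _ (hext v hv)) (convex_convexHull ℝ _)
end

section
/- Let k be a field of characteristic p and let f = A/B ∈ k[[t₁,…,t_n]] be a rational power series with A, B ∈ k[t₁,…,t_n], deg_{t_i} A ≤ h_i and deg_{t_i} B ≤ h_i for all i, and B having nonzero constant term. Then the k-vector space W = {P/B : P ∈ k[t₁,…,t_n], deg_{t_i} P ≤ h_i for all i}, which has dimension at most (h₁+1)⋯(h_n+1), contains f and is invariant under all section operators S_r, r ∈ {0,…,p-1}ⁿ, when k is perfect. -/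
open MvPolynomial

/-- Decomposition of a multivariate polynomial over a perfect field of char `p`:
`C = ∑_{r ∈ {0,…,p-1}ⁿ} t^r (Q_r)^p` with `deg_i Q_r ≤ deg_i C / p`. -/
theorem mv_decomp_aux {k : Type*} [Field k] {p : ℕ} [Fact p.Prime] [CharP k p]
    [PerfectRing k p] {n : ℕ} (C : MvPolynomial (Fin n) k) :
    ∃ Q : (Fin n → Fin p) → MvPolynomial (Fin n) k,
      (∀ r i, (Q r).degreeOf i ≤ C.degreeOf i / p) ∧
      C = ∑ r : Fin n → Fin p,
        monomial (Finsupp.equivFunOnFinite.symm fun i => (r i : ℕ)) (1 : k) * Q r ^ p := by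
  classical
  have hp : p.Prime := Fact.out
  haveI : ExpChar k p := .prime hp
  haveI : ExpChar (MvPolynomial (Fin n) k) p := .prime hp
  set g : (Fin n →₀ ℕ) → Fin n → Fin p := fun d i => ⟨d i % p, Nat.mod_lt _ hp.pos⟩ with hg
  set ediv : (Fin n →₀ ℕ) → (Fin n →₀ ℕ) :=
    fun d => d.mapRange (· / p) (Nat.zero_div p) with hediv
  refine ⟨fun r => ∑ d ∈ C.support.filter (g · = r),
      monomial (ediv d) ((frobeniusEquiv k p).symm (C.coeff d)), ?_, ?_⟩
  · intro r i
    rw [degreeOf_le_iff]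
    intro e he
    obtain ⟨d, hd, he2⟩ := Finset.mem_biUnion.mp (support_sum he)
    have hd' : d ∈ C.support := Finset.mem_of_mem_filter _ hd
    have : e = ediv d := by
      have := support_monomial_subset he2
      simpa using this
    subst this
    have h1 : d i ≤ C.degreeOf i := degreeOf_le_iff.mp le_rfl d hd'
    simpa [hediv, Finsupp.mapRange_apply] using Nat.div_le_div_right h1
  · have key : ∀ r : Fin n → Fin p,
        monomial (Finsupp.equivFunOnFinite.symm fun i => (r i : ℕ)) (1 : k) *
          (∑ d ∈ C.support.filter (g · = r),
            monomial (ediv d) ((frobeniusEquiv k p).symm (C.coeff d))) ^ p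
        = ∑ d ∈ C.support.filter (g · = r), monomial d (C.coeff d) := by
      intro r
      rw [sum_pow_char, Finset.mul_sum]
      refine Finset.sum_congr rfl fun d hd => ?_
      obtain ⟨hdsup, hgd⟩ := Finset.mem_filter.mp hd
      rw [monomial_pow, monomial_mul, one_mul, frobeniusEquiv_symm_pow_p]
      have hexp : (Finsupp.equivFunOnFinite.symm fun i => (r i : ℕ)) + p • ediv d = d := by
        ext i
        have hri : (r i : ℕ) = d i % p := by rw [← hgd]
        simp [hri, hediv, Finsupp.mapRange_apply, Nat.mod_add_div]
      rw [hexp]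
    rw [Finset.sum_congr rfl fun r _ => key r,
      Finset.sum_fiberwise C.support g (fun d => monomial d (C.coeff d))]
    exact C.as_sum

/-- For a rational power series `f = A/B ∈ k[[t₁,…,t_n]]` (with `B(0) ≠ 0` and all partial
degrees of `A, B` at most `h_i`), the `k`-vector space `W = {P/B : deg_{t_i} P ≤ h_i}` has
dimension at most `∏ (h_i + 1)`, contains `f`, and (for `k` perfect of characteristic `p`)
is invariant under all section operators, i.e. every `x ∈ W` decomposes as
`x = ∑_{r ∈ {0,…,p-1}ⁿ} t^r (s_r)^p` with all `s_r ∈ W`. -/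
theorem rational_invariant_space (k : Type*) [Field k] (p : ℕ) [Fact p.Prime] [CharP k p]
    [ExpChar k p] [PerfectRing k p] (n : ℕ) (h : Fin n → ℕ) (A B : MvPolynomial (Fin n) k)
    (hB0 : MvPolynomial.coeff (0 : Fin n →₀ ℕ) B ≠ 0)
    (hdA : ∀ i, A.degreeOf i ≤ h i) (hdB : ∀ i, B.degreeOf i ≤ h i)
    (f : MvPowerSeries (Fin n) k)
    (hf : f * MvPolynomial.coeToMvPowerSeries.ringHom B =
      MvPolynomial.coeToMvPowerSeries.ringHom A) :
    ∃ W : Submodule k (MvPowerSeries (Fin n) k),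
      (W : Set (MvPowerSeries (Fin n) k)) =
        {x | ∃ P : MvPolynomial (Fin n) k, (∀ i, P.degreeOf i ≤ h i) ∧
          x * MvPolynomial.coeToMvPowerSeries.ringHom B =
            MvPolynomial.coeToMvPowerSeries.ringHom P} ∧
      Module.rank k W ≤ (∏ i, (h i + 1) : ℕ) ∧
      f ∈ W ∧
      (∀ x ∈ W, ∃ s : (Fin n → Fin p) → MvPowerSeries (Fin n) k, (∀ r, s r ∈ W) ∧
        x = ∑ r : Fin n → Fin p,
          (∏ i, (MvPowerSeries.X i : MvPowerSeries (Fin n) k) ^ ((r i : ℕ))) * (s r) ^ p) := by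
  classical
  have hp : p.Prime := Fact.out
  set φ : MvPolynomial (Fin n) k →+* MvPowerSeries (Fin n) k :=
    MvPolynomial.coeToMvPowerSeries.ringHom with hφ
  set Binv : MvPowerSeries (Fin n) k := (φ B)⁻¹ with hBinv
  have hBc : MvPowerSeries.constantCoeff (φ B) ≠ 0 := by
    rwa [← MvPowerSeries.coeff_zero_eq_constantCoeff_apply, hφ,
      MvPolynomial.coeToMvPowerSeries.ringHom_apply, MvPolynomial.coeff_coe]
  have hBB : φ B * Binv = 1 := MvPowerSeries.mul_inv_cancel _ hBc
  set S : Set (Fin n →₀ ℕ) := {e | ∀ i, e i ≤ h i} with hS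
  set V : Submodule k (MvPolynomial (Fin n) k) := MvPolynomial.restrictSupport k S with hV
  have hmemV : ∀ P : MvPolynomial (Fin n) k, P ∈ V ↔ ∀ i, P.degreeOf i ≤ h i := by
    intro P
    have : P ∈ V ↔ ↑P.support ⊆ S := MvPolynomial.mem_restrictSupport_iff k
    rw [this]
    constructor
    · intro hP i
      rw [MvPolynomial.degreeOf_le_iff]
      intro d hd
      exact hP hd i
    · intro hP d hd i
      exact MvPolynomial.degreeOf_le_iff.mp (hP i) _ hd
  set L : MvPolynomial (Fin n) k →ₗ[k] MvPowerSeries (Fin n) k :=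
    { toFun := fun P => φ P * Binv
      map_add' := fun P Q => by rw [map_add, add_mul]
      map_smul' := fun c P => by
        rw [RingHom.id_apply, ← smul_mul_assoc, MvPolynomial.smul_eq_C_mul, map_mul,
          MvPowerSeries.smul_eq_C_mul]
        congr 1
        simp [hφ, MvPolynomial.coeToMvPowerSeries.ringHom_apply] } with hL
  refine ⟨Submodule.map L V, ?_, ?_, ?_, ?_⟩
  case _ => -- set equality
    ext x
    simp only [SetLike.mem_coe, Submodule.mem_map, Set.mem_setOf_eq]
    constructor
    · rintro ⟨P, hPV, rfl⟩
      refine ⟨P, (hmemV P).mp hPV, ?_⟩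
      show φ P * Binv * φ B = φ P
      rw [mul_assoc, mul_comm Binv, hBB, mul_one]
    · rintro ⟨P, hdP, hx⟩
      refine ⟨P, (hmemV P).mpr hdP, ?_⟩
      show φ P * Binv = x
      rw [← hx, mul_assoc, hBB, mul_one]
  case _ => -- rank
    refine le_trans (rank_map_le L V) ?_
    have e : S ≃ (∀ i : Fin n, Fin (h i + 1)) :=
      { toFun := fun d => fun i => ⟨d.1 i, Nat.lt_succ_of_le (d.2 i)⟩
        invFun := fun g => ⟨Finsupp.equivFunOnFinite.symm fun i => (g i : ℕ),
          fun i => by simpa using Nat.lt_succ_iff.mp (g i).2⟩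
        left_inv := fun d => by ext i; simp
        right_inv := fun g => by ext i; simp }
    haveI : Fintype S := Fintype.ofEquiv _ e.symm
    rw [rank_eq_card_basis (MvPolynomial.basisRestrictSupport k S)]
    rw [Fintype.card_congr e]
    simp [Fintype.card_pi]
  case _ => -- f ∈ W
    refine ⟨A, (hmemV A).mpr hdA, ?_⟩
    show φ A * Binv = f
    rw [← hf, mul_assoc, hBB, mul_one]
  case _ => -- invariance
    rintro x ⟨P, hPV, rfl⟩
    set C : MvPolynomial (Fin n) k := P * B ^ (p - 1) with hC
    obtain ⟨Q, hQdeg, hQeq⟩ := mv_decomp_aux (p := p) C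
    have hdC : ∀ i, C.degreeOf i ≤ p * h i := by
      intro i
      calc C.degreeOf i ≤ P.degreeOf i + (B ^ (p-1)).degreeOf i :=
            MvPolynomial.degreeOf_mul_le i _ _
        _ ≤ h i + (p-1) * B.degreeOf i := by
            gcongr
            · exact (hmemV P).mp hPV i
            · exact MvPolynomial.degreeOf_pow_le i B (p-1)
        _ ≤ h i + (p-1) * h i := by gcongr; exact hdB i
        _ = p * h i := by
            have : 1 ≤ p := hp.one_lt.le
            nlinarith [Nat.sub_add_cancel this]
    have hQV : ∀ r, Q r ∈ V := by
      intro r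
      rw [hmemV]
      intro i
      refine le_trans (hQdeg r i) ?_
      calc C.degreeOf i / p ≤ p * h i / p := Nat.div_le_div_right (hdC i)
        _ = h i := Nat.mul_div_cancel_left _ hp.pos
    refine ⟨fun r => L (Q r), fun r => ⟨Q r, hQV r, rfl⟩, ?_⟩
    -- now the identity
    have hx : L P * φ B ^ p = φ C := by
      show φ P * Binv * φ B ^ p = φ C
      have hpow : φ B ^ p = φ B * φ B ^ (p-1) := by
        have hps : p = (p-1)+1 := by have := hp.pos; omega
        conv_lhs => rw [hps]
        rw [pow_succ']
      calc φ P * Binv * φ B ^ p = φ P * Binv * (φ B * φ B ^ (p-1)) := by rw [hpow]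
        _ = (φ P * φ (B ^ (p-1))) * (Binv * φ B) := by rw [map_pow]; ring
        _ = φ C := by
            rw [mul_comm Binv, hBB, mul_one, ← map_mul]
    have hxx : L P = φ C * Binv ^ p := by
      have h2 : φ B ^ p * Binv ^ p = 1 := by rw [← mul_pow, hBB, one_pow]
      calc L P = L P * (φ B ^ p * Binv ^ p) := by rw [h2, mul_one]
        _ = (L P * φ B ^ p) * Binv ^ p := by ring
        _ = φ C * Binv ^ p := by rw [hx]
    rw [hxx, hQeq, map_sum, Finset.sum_mul]
    refine Finset.sum_congr rfl fun r _ => ?_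
    have hmon : φ (MvPolynomial.monomial
        (Finsupp.equivFunOnFinite.symm fun i => ((r i : ℕ))) (1 : k)) =
        ∏ i, (MvPowerSeries.X i : MvPowerSeries (Fin n) k) ^ ((r i : ℕ)) := by
      have hpoly : (MvPolynomial.monomial
          (Finsupp.equivFunOnFinite.symm fun i => ((r i : ℕ))) (1 : k)) =
          ∏ i, (MvPolynomial.X i : MvPolynomial (Fin n) k) ^ ((r i : ℕ)) := by
        rw [← MvPolynomial.prod_X_pow_eq_monomial,
          Finset.prod_subset (Finset.subset_univ _)
            (fun i _ hi => by simp [Finsupp.notMem_support_iff.mp hi])]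
        exact Finset.prod_congr rfl fun i _ => by simp
      rw [hpoly]
      simp [hφ, MvPolynomial.coeToMvPowerSeries.ringHom_apply]
    rw [map_mul, map_pow, hmon, mul_assoc, ← mul_pow]
    rfl
end
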